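/- Let z₀ ∈ ℂ with |Im z₀| < h and define f(z) = e^{2πiz} − e^{2πi z₀}. Then for y ∈ [−h, h] with y ≠ Im z₀, the right derivative of I(y) = ∫₀¹ log|e^{2πi(x+iy)} − e^{2πi z₀}| dx satisfies (1/2π) D₊ I(y) = −1 if y < Im z₀ and = 0 if y ≥ Im z₀. -/

import Mathlib

open Complex Metric Set

section Aux

-- mean value: ∫ θ in 0..2π, Log(1 - u e^{iθ}) = 0 for |u| < 1
lemma meanval (u : ℂ) (hu : ‖u‖ < 1) :
    ∫ θ in (0:ℝ)..(2*Real.pi), Complex.log (1 - u * Complex.exp (θ * Complex.I)) = 0 := by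
  set f : ℂ → ℂ := fun z => Complex.log (1 - u * z) with hf
  have hslit : ∀ z : ℂ, ‖z‖ ≤ 1 → (1 - u * z) ∈ Complex.slitPlane := by
    intro z hz
    left
    have h1 : ‖u * z‖ < 1 := by
      rw [norm_mul]
      calc ‖u‖ * ‖z‖ ≤ ‖u‖ * 1 := by
            exact mul_le_mul_of_nonneg_left hz (norm_nonneg u)
        _ < 1 := by simpa using hu
    have : (u * z).re ≤ ‖u * z‖ := Complex.re_le_norm _
    simp only [Complex.sub_re, Complex.one_re]
    linarith
  have hdiff : ∀ z : ℂ, ‖z‖ ≤ 1 → DifferentiableAt ℂ f z := by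
    intro z hz
    exact DifferentiableAt.comp (f := fun w : ℂ => 1 - u * w) z (Complex.differentiableAt_log (hslit z hz))
      (by fun_prop)
  have hdc : DiffContOnCl ℂ f (ball (0:ℂ) 1) := by
    apply DifferentiableOn.diffContOnCl
    rw [closure_ball (0:ℂ) one_ne_zero]
    intro z hz
    exact (hdiff z (by simpa [Complex.dist_eq] using hz)).differentiableWithinAt
  have key := hdc.circleIntegral_sub_inv_smul (w := 0) (by simp)
  rw [circleIntegral] at key
  have hsimp : ∀ θ : ℝ, deriv (circleMap 0 1) θ •
      ((circleMap 0 1 θ - 0)⁻¹ • f (circleMap 0 1 θ)) = Complex.I * f (Complex.exp (θ * Complex.I)) := by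
    intro θ
    have h1 : circleMap 0 1 θ = Complex.exp (θ * Complex.I) := by simp [circleMap]
    have h2 : Complex.exp (θ * Complex.I) ≠ 0 := Complex.exp_ne_zero _
    rw [deriv_circleMap, h1, smul_eq_mul, smul_eq_mul, sub_zero]
    field_simp
  rw [intervalIntegral.integral_congr (fun θ _ => hsimp θ)] at key
  rw [intervalIntegral.integral_const_mul] at key
  have hf0 : f 0 = 0 := by simp [hf]
  rw [hf0, smul_eq_mul, mul_zero] at key
  rcases mul_eq_zero.1 key with h | h
  · exact absurd h Complex.I_ne_zero
  · exact h

lemma contf (u : ℂ) (hu : ‖u‖ < 1) :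
    Continuous fun θ : ℝ => Complex.log (1 - u * Complex.exp (θ * Complex.I)) := by
  rw [continuous_iff_continuousAt]
  intro θ
  have hmem : (1 - u * Complex.exp (θ * Complex.I)) ∈ Complex.slitPlane := by
    left
    have h1 : ‖u * Complex.exp (θ * Complex.I)‖ < 1 := by
      rw [norm_mul, Complex.norm_exp_ofReal_mul_I, mul_one]; exact hu
    have h2 : (u * Complex.exp (θ * Complex.I)).re ≤ ‖u * Complex.exp (θ * Complex.I)‖ :=
      Complex.re_le_norm _
    simp only [Complex.sub_re, Complex.one_re]
    linarith
  exact ContinuousAt.comp (x := θ) (continuousAt_clog hmem)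
    (by fun_prop : Continuous fun θ:ℝ => 1 - u * Complex.exp (θ * Complex.I)).continuousAt

-- ∫ x in 0..1, log |1 - u e^{2πix}| = 0 for |u| < 1
lemma core01 (u : ℂ) (hu : ‖u‖ < 1) :
    ∫ x in (0:ℝ)..1, Real.log (‖1 - u * Complex.exp (2 * Real.pi * Complex.I * x)‖) = 0 := by
  have hre : ∫ θ in (0:ℝ)..(2*Real.pi),
      Real.log (‖1 - u * Complex.exp (θ * Complex.I)‖) = 0 := by
    have hint : IntervalIntegrable (fun θ : ℝ => Complex.log (1 - u * Complex.exp (θ * Complex.I)))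
        MeasureTheory.volume 0 (2*Real.pi) := (contf u hu).intervalIntegrable _ _
    have := (Complex.reCLM.intervalIntegral_comp_comm hint).symm
    simp only [Complex.reCLM_apply] at this
    calc ∫ θ in (0:ℝ)..(2*Real.pi), Real.log (‖1 - u * Complex.exp (θ * Complex.I)‖)
        = ∫ θ in (0:ℝ)..(2*Real.pi), (Complex.log (1 - u * Complex.exp (θ * Complex.I))).re := by
          apply intervalIntegral.integral_congr
          intro θ _
          simp [Complex.log_re]
      _ = (∫ θ in (0:ℝ)..(2*Real.pi), Complex.log (1 - u * Complex.exp (θ * Complex.I))).re := this.symm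
      _ = 0 := by rw [meanval u hu]; simp
  have hsub := intervalIntegral.integral_comp_mul_left
    (f := fun θ : ℝ => Real.log (‖1 - u * Complex.exp (θ * Complex.I)‖))
    (a := 0) (b := 1) (c := 2*Real.pi) (by positivity)
  simp only [mul_zero, mul_one] at hsub
  calc ∫ x in (0:ℝ)..1, Real.log (‖1 - u * Complex.exp (2 * Real.pi * Complex.I * x)‖)
      = ∫ x in (0:ℝ)..1, Real.log (‖1 - u * Complex.exp (↑(2*Real.pi*x) * Complex.I)‖) := by
        apply intervalIntegral.integral_congr
        intro x _
        norm_num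
        ring_nf
    _ = (2*Real.pi)⁻¹ • ∫ θ in (0:ℝ)..(2*Real.pi), Real.log (‖1 - u * Complex.exp (θ * Complex.I)‖) := hsub
    _ = 0 := by rw [hre]; simp

lemma one_sub_ne (u z : ℂ) (hu : ‖u‖ < 1) (hz : ‖z‖ = 1) :
    1 - u * z ≠ 0 := by
  intro h
  have : ‖u * z‖ = 1 := by
    have : u * z = 1 := by linear_combination -h
    rw [this]; simp
  rw [norm_mul, hz, mul_one] at this
  exact absurd this (ne_of_lt hu)

lemma abs_e (x : ℝ) : ‖Complex.exp (2 * Real.pi * Complex.I * x)‖ = 1 := by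
  rw [show (2 * (Real.pi:ℂ) * Complex.I * x) = (2 * Real.pi * x : ℝ) * Complex.I by push_cast; ring]
  exact Complex.norm_exp_ofReal_mul_I _

lemma cont_core (u : ℂ) (hu : ‖u‖ < 1) :
    Continuous fun x : ℝ => Real.log (‖1 - u * Complex.exp (2 * Real.pi * Complex.I * x)‖) := by
  rw [continuous_iff_continuousAt]
  intro x
  have hne : ‖1 - u * Complex.exp (2 * Real.pi * Complex.I * x)‖ ≠ 0 := by
    exact norm_ne_zero_iff.mpr (one_sub_ne u _ hu (abs_e x))
  exact ContinuousAt.comp (x := x) (Real.continuousAt_log hne)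
    (continuous_norm.comp (by fun_prop : Continuous fun x:ℝ =>
      (1 - u * Complex.exp (2 * Real.pi * Complex.I * x)))).continuousAt

lemma core01' (u : ℂ) (hu : ‖u‖ < 1) :
    ∫ x in (0:ℝ)..1, Real.log (‖1 - u * Complex.exp (-(2 * Real.pi * Complex.I * x))‖) = 0 := by
  have heq : ∀ x : ℝ, ‖1 - u * Complex.exp (-(2 * Real.pi * Complex.I * x))‖
      = ‖1 - (starRingEnd ℂ) u * Complex.exp (2 * Real.pi * Complex.I * x)‖ := by
    intro x
    rw [← Complex.norm_conj (1 - u * Complex.exp (-(2 * Real.pi * Complex.I * x)))]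
    congr 1
    rw [map_sub, map_one, map_mul, ← Complex.exp_conj]
    congr 2
    rw [show ((starRingEnd ℂ)) (-(2 * (Real.pi:ℂ) * Complex.I * x)) = 2 * Real.pi * Complex.I * x by
      simp [map_neg, map_mul, Complex.conj_I, Complex.conj_ofReal, map_ofNat]]
  rw [intervalIntegral.integral_congr (g := fun x : ℝ =>
    Real.log (‖1 - (starRingEnd ℂ) u * Complex.exp (2 * Real.pi * Complex.I * x)‖))
    (fun x _ => by rw [heq x])]
  exact core01 _ (by rwa [Complex.norm_conj])

lemma abs_e' (x : ℝ) : ‖Complex.exp (-(2 * Real.pi * Complex.I * x))‖ = 1 := by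
  rw [show (-(2 * (Real.pi:ℂ) * Complex.I * x)) = (-(2 * Real.pi * x) : ℝ) * Complex.I by push_cast; ring]
  exact Complex.norm_exp_ofReal_mul_I _

lemma cont_core' (u : ℂ) (hu : ‖u‖ < 1) :
    Continuous fun x : ℝ => Real.log (‖1 - u * Complex.exp (-(2 * Real.pi * Complex.I * x))‖) := by
  rw [continuous_iff_continuousAt]
  intro x
  have hne : ‖1 - u * Complex.exp (-(2 * Real.pi * Complex.I * x))‖ ≠ 0 :=
    norm_ne_zero_iff.mpr (one_sub_ne u _ hu (abs_e' x))
  exact ContinuousAt.comp (x := x) (Real.continuousAt_log hne)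
    (continuous_norm.comp (by fun_prop : Continuous fun x:ℝ =>
      (1 - u * Complex.exp (-(2 * Real.pi * Complex.I * x))))).continuousAt

lemma re_arg (z : ℂ) : (2 * (Real.pi:ℂ) * Complex.I * z).re = -(2 * Real.pi * z.im) := by
  simp [Complex.mul_re, Complex.mul_im, Complex.I_re, Complex.I_im]

lemma Jgt (z₀ : ℂ) (t : ℝ) (ht : z₀.im < t) :
    ∫ x in (0:ℝ)..1, Real.log (‖Complex.exp (2 * Real.pi * Complex.I * (x + t * Complex.I)) -
        Complex.exp (2 * Real.pi * Complex.I * z₀)‖) = -(2 * Real.pi * z₀.im) := by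
  set w := Complex.exp (2 * Real.pi * Complex.I * z₀) with hwdef
  set c := Complex.exp (2 * Real.pi * Complex.I * ((t:ℂ) * Complex.I)) with hcdef
  have hw : w ≠ 0 := Complex.exp_ne_zero _
  have habsw : ‖w‖ = Real.exp (-(2 * Real.pi * z₀.im)) := by
    rw [hwdef, Complex.norm_exp, re_arg]
  have habsc : ‖c‖ = Real.exp (-(2 * Real.pi * t)) := by
    rw [hcdef, Complex.norm_exp, re_arg]; simp
  set u := c / w with hudef
  have hu : ‖u‖ < 1 := by
    rw [hudef, norm_div, habsc, habsw, ← Real.exp_sub, Real.exp_lt_one_iff]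
    nlinarith [Real.pi_pos]
  have hpt : ∀ x : ℝ, Complex.exp (2 * Real.pi * Complex.I * ((x:ℂ) + (t:ℂ) * Complex.I)) - w
      = -w * (1 - u * Complex.exp (2 * Real.pi * Complex.I * x)) := by
    intro x
    rw [show (2 * (Real.pi:ℂ) * Complex.I * ((x:ℂ) + (t:ℂ) * Complex.I))
        = 2 * Real.pi * Complex.I * x + 2 * Real.pi * Complex.I * ((t:ℂ) * Complex.I) by ring,
      Complex.exp_add, hudef]
    field_simp
    rw [show (2 * (Real.pi:ℂ) * Complex.I ^ 2 * t) = 2 * Real.pi * Complex.I * ((t:ℂ) * Complex.I) by ring, ← hcdef]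
    ring
  have hlog : ∀ x : ℝ, Real.log (‖Complex.exp (2 * Real.pi * Complex.I * ((x:ℂ) + (t:ℂ) * Complex.I)) - w‖)
      = Real.log (‖w‖) + Real.log (‖1 - u * Complex.exp (2 * Real.pi * Complex.I * x)‖) := by
    intro x
    rw [hpt x, norm_mul, norm_neg]
    exact Real.log_mul (norm_ne_zero_iff.mpr hw) (norm_ne_zero_iff.mpr (one_sub_ne u _ hu (abs_e x)))
  rw [intervalIntegral.integral_congr (g := fun x : ℝ => Real.log (‖w‖)
      + Real.log (‖1 - u * Complex.exp (2 * Real.pi * Complex.I * x)‖))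
      (fun x _ => hlog x),
    intervalIntegral.integral_add (intervalIntegrable_const)
      ((cont_core u hu).intervalIntegrable _ _),
    core01 u hu, add_zero, intervalIntegral.integral_const]
  rw [habsw, Real.log_exp]
  simp

lemma Jlt (z₀ : ℂ) (t : ℝ) (ht : t < z₀.im) :
    ∫ x in (0:ℝ)..1, Real.log (‖Complex.exp (2 * Real.pi * Complex.I * (x + t * Complex.I)) -
        Complex.exp (2 * Real.pi * Complex.I * z₀)‖) = -(2 * Real.pi * t) := by
  set w := Complex.exp (2 * Real.pi * Complex.I * z₀) with hwdef
  set c := Complex.exp (2 * Real.pi * Complex.I * ((t:ℂ) * Complex.I)) with hcdef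
  have hc : c ≠ 0 := Complex.exp_ne_zero _
  have habsw : ‖w‖ = Real.exp (-(2 * Real.pi * z₀.im)) := by
    rw [hwdef, Complex.norm_exp, re_arg]
  have habsc : ‖c‖ = Real.exp (-(2 * Real.pi * t)) := by
    rw [hcdef, Complex.norm_exp, re_arg]; simp
  set v := w / c with hvdef
  have hv : ‖v‖ < 1 := by
    rw [hvdef, norm_div, habsc, habsw, ← Real.exp_sub, Real.exp_lt_one_iff]
    nlinarith [Real.pi_pos]
  have hpt : ∀ x : ℝ, Complex.exp (2 * Real.pi * Complex.I * ((x:ℂ) + (t:ℂ) * Complex.I)) - w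
      = (c * Complex.exp (2 * Real.pi * Complex.I * x))
        * (1 - v * Complex.exp (-(2 * Real.pi * Complex.I * x))) := by
    intro x
    have hee : Complex.exp (2 * Real.pi * Complex.I * x) * Complex.exp (-(2 * Real.pi * Complex.I * x)) = 1 := by
      rw [← Complex.exp_add]; simp
    rw [show (2 * (Real.pi:ℂ) * Complex.I * ((x:ℂ) + (t:ℂ) * Complex.I))
        = 2 * Real.pi * Complex.I * x + 2 * Real.pi * Complex.I * ((t:ℂ) * Complex.I) by ring,
      Complex.exp_add]
    have h2 : w / c * c = w := div_mul_cancel₀ w hc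
    calc Complex.exp (2 * Real.pi * Complex.I * x) * c - w
        = c * Complex.exp (2 * Real.pi * Complex.I * x)
          - (w / c * c) * (Complex.exp (2 * Real.pi * Complex.I * x) * Complex.exp (-(2 * Real.pi * Complex.I * x))) := by
          rw [h2, hee, mul_one]; ring
      _ = c * Complex.exp (2 * Real.pi * Complex.I * x) * (1 - w / c * Complex.exp (-(2 * Real.pi * Complex.I * x))) := by
          ring
  have hlog : ∀ x : ℝ, Real.log (‖Complex.exp (2 * Real.pi * Complex.I * ((x:ℂ) + (t:ℂ) * Complex.I)) - w‖)
      = Real.log (‖c‖) + Real.log (‖1 - v * Complex.exp (-(2 * Real.pi * Complex.I * x))‖) := by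
    intro x
    rw [hpt x, norm_mul, norm_mul, abs_e, mul_one]
    exact Real.log_mul (norm_ne_zero_iff.mpr hc) (norm_ne_zero_iff.mpr (one_sub_ne v _ hv (abs_e' x)))
  rw [intervalIntegral.integral_congr (g := fun x : ℝ => Real.log (‖c‖)
      + Real.log (‖1 - v * Complex.exp (-(2 * Real.pi * Complex.I * x))‖))
      (fun x _ => hlog x),
    intervalIntegral.integral_add (intervalIntegrable_const)
      ((cont_core' v hv).intervalIntegrable _ _),
    core01' v hv, add_zero, intervalIntegral.integral_const]
  rw [habsc, Real.log_exp]
  simp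


end Aux

/-- For `f(z) = e^{2πiz} − e^{2πi z₀}` with `|Im z₀| < h`, the right derivative of
`I(y) = ∫₀¹ log|e^{2πi(x+iy)} − e^{2πi z₀}| dx` satisfies `(1/2π) D₊I(y) = -1` for
`y < Im z₀` and `= 0` for `y > Im z₀`. -/
theorem stmt5 (h : ℝ) (z₀ : ℂ) (hz : |z₀.im| < h) (y : ℝ) (hy₁ : -h ≤ y) (hy₂ : y ≤ h)
    (hne : y ≠ z₀.im) :
    derivWithin
        (fun t : ℝ => ∫ x in (0 : ℝ)..1,
          Real.log (‖Complex.exp (2 * Real.pi * Complex.I * (x + t * Complex.I)) -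
              Complex.exp (2 * Real.pi * Complex.I * z₀)‖)) (Set.Ici y) y =
      if y < z₀.im then -(2 * Real.pi) else 0 := by
  rcases lt_or_gt_of_ne hne with hlt | hgt
  · rw [if_pos hlt]
    have hgd : HasDerivWithinAt (fun t : ℝ => -(2 * Real.pi * t)) (-(2 * Real.pi)) (Set.Ici y) y := by
      have h1 : HasDerivAt (fun t : ℝ => -(2 * Real.pi * t)) (-(2 * Real.pi)) y := by
        exact ((hasDerivAt_id y).const_mul (2 * Real.pi)).neg.congr_deriv (by simp)
      exact h1.hasDerivWithinAt
    have hev : (fun t : ℝ => ∫ x in (0 : ℝ)..1,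
          Real.log (‖Complex.exp (2 * Real.pi * Complex.I * (x + t * Complex.I)) -
              Complex.exp (2 * Real.pi * Complex.I * z₀)‖))
        =ᶠ[nhdsWithin y (Set.Ici y)] fun t => -(2 * Real.pi * t) := by
      filter_upwards [mem_nhdsWithin_of_mem_nhds (Iio_mem_nhds hlt)] with t ht
      exact Jlt z₀ t ht
    rw [(hgd.congr_of_eventuallyEq hev (Jlt z₀ y hlt)).derivWithin
      (uniqueDiffOn_Ici y y Set.self_mem_Ici)]
  · rw [if_neg (not_lt.mpr hgt.le)]
    have hgd : HasDerivWithinAt (fun _ : ℝ => -(2 * Real.pi * z₀.im)) 0 (Set.Ici y) y :=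
      hasDerivWithinAt_const _ _ _
    have hev : (fun t : ℝ => ∫ x in (0 : ℝ)..1,
          Real.log (‖Complex.exp (2 * Real.pi * Complex.I * (x + t * Complex.I)) -
              Complex.exp (2 * Real.pi * Complex.I * z₀)‖))
        =ᶠ[nhdsWithin y (Set.Ici y)] fun _ => -(2 * Real.pi * z₀.im) := by
      filter_upwards [self_mem_nhdsWithin] with t ht
      exact Jgt z₀ t (lt_of_lt_of_le hgt ht)
    rw [(hgd.congr_of_eventuallyEq hev (Jgt z₀ y hgt)).derivWithin
      (uniqueDiffOn_Ici y y Set.self_mem_Ici)]
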